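/- Let R, S be symmetric n×n real matrices such that the 2n×2n block matrix [[R, I],[I, S]] is positive definite. Then the matrix I − R·S is invertible. -/

import Mathlib

open Matrix

/-- If the block matrix `[[R, I],[I, S]]` is positive definite
(with `R`, `S` symmetric), then `I − R·S` is invertible. -/
theorem one_sub_mul_isUnit_of_blocks_posDef (n : ℕ) (R S : Matrix (Fin n) (Fin n) ℝ)
    (hR : R.IsSymm) (hS : S.IsSymm)
    (hpos : (fromBlocks R (1 : Matrix (Fin n) (Fin n) ℝ)
      (1 : Matrix (Fin n) (Fin n) ℝ) S).PosDef) :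
    IsUnit ((1 : Matrix (Fin n) (Fin n) ℝ) - R * S) := by
  have hSpd : S.PosDef := by
    rw [posDef_iff_dotProduct_mulVec]
    constructor
    · rw [IsHermitian, conjTranspose_eq_transpose_of_trivial]
      exact hS
    · intro x hx
      have h := (posDef_iff_dotProduct_mulVec.mp hpos).2 (x := Sum.elim 0 x) (by
        intro h
        apply hx
        funext i
        exact congrFun h (Sum.inr i))
      simpa [fromBlocks_mulVec, dotProduct, mulVec] using h
  have hinv : Invertible S := hSpd.isUnit.invertible
  have hdet : (fromBlocks R (1 : Matrix (Fin n) (Fin n) ℝ)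
      (1 : Matrix (Fin n) (Fin n) ℝ) S).det = (R * S - 1).det := by
    rw [det_fromBlocks₂₂]
    have hdu : IsUnit S.det := isUnit_iff_ne_zero.2 hSpd.det_pos.ne'
    have h1 : R - 1 * ⅟S * 1 = (R * S - 1) * S⁻¹ := by
      rw [invOf_eq_nonsing_inv, one_mul, mul_one, sub_mul, mul_assoc,
        mul_nonsing_inv _ hdu, mul_one, one_mul]
    rw [h1, det_mul, det_nonsing_inv]
    rw [Ring.inverse_eq_inv']
    field_simp [hSpd.det_pos.ne']
  have hpos' := hpos.det_pos
  rw [hdet] at hpos'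
  rw [← neg_sub (R * S) 1, isUnit_iff_isUnit_det, det_neg]
  exact (IsUnit.mul (isUnit_iff_ne_zero.2 (by positivity))
    (isUnit_iff_ne_zero.2 hpos'.ne'))
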